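/- Let Ω be a finite set, F ≤ Sym(Ω) a permutation group, p a prime, and F(p) ≤ F a p-Sylow subgroup of F. If the partition of Ω into F-orbits coincides with the partition of Ω into F(p)-orbits, then for every ω ∈ Ω the stabilizer F(p)_ω is a p-Sylow subgroup of the stabilizer F_ω. -/

import Mathlib

/-- `H` is a `p`-Sylow subgroup of `K` (both subgroups of an ambient group `G`):
`H` is a `p`-subgroup of `K` that is maximal among `p`-subgroups of `K`. -/
def IsSylowIn {G : Type*} [Group G] (p : ℕ) (H K : Subgroup G) : Prop :=
  H ≤ K ∧ IsPGroup p H ∧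
    ∀ Q : Subgroup G, Q ≤ K → IsPGroup p Q → H ≤ Q → Q = H

lemma stab_eq {Ω : Type*} (ω : Ω) (F : Subgroup (Equiv.Perm Ω)) :
    MulAction.stabilizer F ω = (MulAction.stabilizer (Equiv.Perm Ω) ω).subgroupOf F := by
  ext g
  simp [MulAction.mem_stabilizer_iff, Subgroup.mem_subgroupOf]
  rfl

lemma card_orbit {Ω : Type*} [Fintype Ω] (ω : Ω) (F : Subgroup (Equiv.Perm Ω)) :
    Nat.card (MulAction.orbit F ω) * Nat.card (F ⊓ MulAction.stabilizer (Equiv.Perm Ω) ω : Subgroup (Equiv.Perm Ω)) = Nat.card F := by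
  rw [Nat.card_congr (MulAction.orbitEquivQuotientStabilizer F ω)]
  have e : (F ⊓ MulAction.stabilizer (Equiv.Perm Ω) ω).subgroupOf F = MulAction.stabilizer F ω := by
    rw [Subgroup.inf_subgroupOf_left]
    exact (stab_eq ω F).symm
  have h1 : Nat.card (F ⊓ MulAction.stabilizer (Equiv.Perm Ω) ω : Subgroup (Equiv.Perm Ω))
      = Nat.card (MulAction.stabilizer F ω) := by
    rw [← e]
    exact (Nat.card_congr (Subgroup.subgroupOfEquivOfLe inf_le_left).toEquiv).symm
  rw [h1, mul_comm]
  exact Subgroup.card_mul_index _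

/-- If the partition of `Ω` into `F`-orbits coincides with the partition into
`F(p)`-orbits, then each point stabilizer `F(p)_ω` is a `p`-Sylow subgroup of `F_ω`. -/
theorem stmt1 {Ω : Type*} [Fintype Ω] (p : ℕ) (hp : p.Prime)
    (F Fp : Subgroup (Equiv.Perm Ω)) (hSylow : IsSylowIn p Fp F)
    (horb : ∀ ω : Ω, MulAction.orbit F ω = MulAction.orbit Fp ω) :
    ∀ ω : Ω,
      IsSylowIn p (Fp ⊓ MulAction.stabilizer (Equiv.Perm Ω) ω)
        (F ⊓ MulAction.stabilizer (Equiv.Perm Ω) ω) := by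
  haveI : Fact p.Prime := ⟨hp⟩
  obtain ⟨hle, hpF, hmax⟩ := hSylow
  -- Fp.subgroupOf F is a Sylow subgroup of F
  have hpFsub : IsPGroup p (Fp.subgroupOf F) :=
    hpF.of_equiv (Subgroup.subgroupOfEquivOfLe hle).symm
  let S : Sylow p F :=
    { toSubgroup := Fp.subgroupOf F
      isPGroup' := hpFsub
      is_maximal' := by
        intro Q hQ hFpQ
        have h1 : Q.map F.subtype ≤ F := Subgroup.map_subtype_le Q
        have h2 : IsPGroup p (Q.map F.subtype) := hQ.map _
        have h3 : Fp ≤ Q.map F.subtype := by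
          rw [← inf_of_le_left hle, ← Subgroup.subgroupOf_map_subtype]
          exact Subgroup.map_mono hFpQ
        have h4 := hmax _ h1 h2 h3
        apply Subgroup.map_injective F.subtype_injective
        rw [h4, Subgroup.subgroupOf_map_subtype, inf_of_le_left hle] }
  have hndvd : ¬ p ∣ Fp.relIndex F := by
    rw [Subgroup.relIndex]
    exact S.not_dvd_index
  intro ω
  set st := MulAction.stabilizer (Equiv.Perm Ω) ω with hst
  have hle' : Fp ⊓ st ≤ F ⊓ st := inf_le_inf_right st hle
  have hpH : IsPGroup p (Fp ⊓ st : Subgroup (Equiv.Perm Ω)) := hpF.to_le inf_le_left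
  refine ⟨hle', hpH, ?_⟩
  -- cardinality bookkeeping
  have horbcard : Nat.card (MulAction.orbit F ω) = Nat.card (MulAction.orbit Fp ω) := by
    rw [horb ω]
  have h5 := card_orbit ω F
  have h6 := card_orbit ω Fp
  have h7 : Fp.relIndex F * Nat.card Fp = Nat.card F := by
    have := Subgroup.card_mul_index (Fp.subgroupOf F)
    rw [Nat.card_congr (Subgroup.subgroupOfEquivOfLe hle).toEquiv] at this
    rw [Subgroup.relIndex, mul_comm]
    exact this
  have h8 : (Fp ⊓ st).relIndex (F ⊓ st) * Nat.card (Fp ⊓ st : Subgroup (Equiv.Perm Ω))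
      = Nat.card (F ⊓ st : Subgroup (Equiv.Perm Ω)) := by
    have := Subgroup.card_mul_index ((Fp ⊓ st).subgroupOf (F ⊓ st))
    rw [Nat.card_congr (Subgroup.subgroupOfEquivOfLe hle').toEquiv] at this
    rw [Subgroup.relIndex, mul_comm]
    exact this
  have hcardpos : 0 < Nat.card (Fp ⊓ st : Subgroup (Equiv.Perm Ω)) := Nat.card_pos
  haveI : Nonempty (MulAction.orbit F ω) := ⟨⟨ω, MulAction.mem_orbit_self ω⟩⟩
  have horbpos : 0 < Nat.card (MulAction.orbit F ω) := Nat.card_pos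
  have key : (Fp ⊓ st).relIndex (F ⊓ st) = Fp.relIndex F := by
    have e1 : Nat.card (MulAction.orbit F ω) * ((Fp ⊓ st).relIndex (F ⊓ st) * Nat.card (Fp ⊓ st : Subgroup (Equiv.Perm Ω)))
        = Nat.card (MulAction.orbit F ω) * (Fp.relIndex F * Nat.card (Fp ⊓ st : Subgroup (Equiv.Perm Ω))) := by
      rw [h8, h5, ← h7, ← h6, horbcard]; ring
    have := Nat.eq_of_mul_eq_mul_left horbpos e1
    exact Nat.eq_of_mul_eq_mul_right hcardpos this
  have hndvd' : ¬ p ∣ (Fp ⊓ st).relIndex (F ⊓ st) := key ▸ hndvd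
  intro Q hQK hQp hHQ
  refine le_antisymm ?_ hHQ
  have hrel : (Fp ⊓ st).relIndex Q * Q.relIndex (F ⊓ st) = (Fp ⊓ st).relIndex (F ⊓ st) :=
    Subgroup.relIndex_mul_relIndex _ _ _ hHQ hQK
  have hdvd1 : ¬ p ∣ (Fp ⊓ st).relIndex Q := fun h =>
    hndvd' (hrel ▸ Dvd.dvd.mul_right h _)
  obtain ⟨k, hk⟩ := hQp.exists_card_eq
  have hdvd2 : (Fp ⊓ st).relIndex Q ∣ p ^ k := by
    rw [← hk]
    exact Subgroup.index_dvd_card ((Fp ⊓ st).subgroupOf Q)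
  obtain ⟨j, hj, hje⟩ := (Nat.dvd_prime_pow hp).mp hdvd2
  have hj0 : j = 0 := by
    by_contra hj0
    exact hdvd1 (hje ▸ dvd_pow_self p hj0)
  rw [hj0, pow_zero] at hje
  exact Subgroup.relIndex_eq_one.mp hje
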